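/- (Growth of the limiting one-point function, eq. (asymp rho)) As Re(ξ) → +∞, ρ(ξ) ~ Re(ξ)²/2, i.e. ρ(ξ) / Re(ξ)² → 1/2, where ρ(ξ) := (1/2) ∫_{-∞}^{∞} exp( -x⁴ P( Re(ξ)/x - 1 ) ) / 𝒫(x⁴) · |x| dx. -/

import Mathlib

open MeasureTheory Real Filter Topology

/-- `P(y) = y²/4 + y³/6 + y⁴/24`. -/
noncomputable def Pfun (y : ℝ) : ℝ := y^2/4 + y^3/6 + y^4/24

/-- The Pearcey-like integral `𝒫(θ) = ∫_ℝ e^(-θ P(y)) dy`. -/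
noncomputable def Pearcey (θ : ℝ) : ℝ := ∫ y : ℝ, Real.exp (-θ * Pfun y)

lemma Pfun_ge (y : ℝ) : y^2/12 ≤ Pfun y := by
  unfold Pfun; nlinarith [sq_nonneg (y^2 + 2*y)]

lemma Pfun_cont : Continuous Pfun := by unfold Pfun; fun_prop

lemma integrable_exp_P {θ : ℝ} (hθ : 0 < θ) :
    Integrable (fun y : ℝ => Real.exp (-θ * Pfun y)) := by
  refine (integrable_exp_neg_mul_sq (show (0:ℝ) < θ/12 by linarith)).mono' ?_ ?_
  · have hc : Continuous fun y : ℝ => Real.exp (-θ * Pfun y) :=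
      Real.continuous_exp.comp (continuous_const.mul Pfun_cont)
    exact hc.aestronglyMeasurable
  · filter_upwards with y
    rw [Real.norm_eq_abs, abs_of_pos (Real.exp_pos _)]
    exact Real.exp_le_exp.2 (by nlinarith [Pfun_ge y, hθ.le])

lemma measurable_Pearcey : Measurable Pearcey := by
  have h : StronglyMeasurable fun p : ℝ × ℝ => Real.exp (-p.1 * Pfun p.2) :=
    (((continuous_fst.neg.mul (Pfun_cont.comp continuous_snd))).rexp).stronglyMeasurable
  exact h.integral_prod_right'.measurable

lemma Pfun_le_sq {y : ℝ} (h1 : -1 ≤ y) (h2 : y ≤ 1) : Pfun y ≤ y^2/2 := by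
  unfold Pfun
  nlinarith [sq_nonneg y, mul_nonneg (mul_nonneg (sq_nonneg y) (sub_nonneg.2 h2)) (by linarith : (0:ℝ) ≤ y + 1)]

lemma Pearcey_ge {θ : ℝ} (hθ : 0 < θ) :
    2 * Real.exp (-2⁻¹) / Real.sqrt (1+θ) ≤ Pearcey θ := by
  set δ : ℝ := (Real.sqrt (1+θ))⁻¹ with hδdef
  have hs : 0 < Real.sqrt (1+θ) := Real.sqrt_pos.2 (by linarith)
  have hδ : 0 < δ := inv_pos.2 hs
  have hs1 : 1 ≤ Real.sqrt (1+θ) := by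
    have := Real.sqrt_le_sqrt (show (1:ℝ) ≤ 1+θ by linarith)
    simpa using this
  have hδ1 : δ ≤ 1 := by
    rw [hδdef, inv_le_one_iff₀]; right; exact hs1
  have hθδ : θ * δ^2 ≤ 1 := by
    have : δ^2 = (1+θ)⁻¹ := by
      rw [hδdef, ← Real.sq_sqrt (by linarith : (0:ℝ) ≤ 1+θ)]; field_simp; rw [Real.sqrt_sq hs.le]
    rw [this]
    rw [mul_inv_le_iff₀ (by linarith)]; linarith
  have key : ∀ y ∈ Set.Icc (-δ) δ, Real.exp (-2⁻¹) ≤ Real.exp (-θ * Pfun y) := by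
    intro y hy
    apply Real.exp_le_exp.2
    have hPy : Pfun y ≤ y^2/2 := Pfun_le_sq (by linarith [hy.1]) (by linarith [hy.2])
    have hy2 : y^2 ≤ δ^2 := sq_le_sq' (by linarith [hy.1]) hy.2
    have : θ * Pfun y ≤ 2⁻¹ := by nlinarith
    linarith
  have h1 : ∫ y in Set.Icc (-δ) δ, Real.exp (-2⁻¹) ≤ ∫ y in Set.Icc (-δ) δ, Real.exp (-θ * Pfun y) := by
    apply setIntegral_mono_on
    · exact integrableOn_const (by rw [Real.volume_Icc]; exact ENNReal.ofReal_ne_top)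
    · exact (integrable_exp_P hθ).integrableOn
    · exact measurableSet_Icc
    · exact key
  have h2 : ∫ y in Set.Icc (-δ) δ, Real.exp (-θ * Pfun y) ≤ Pearcey θ := by
    apply setIntegral_le_integral (integrable_exp_P hθ)
    filter_upwards with y using (Real.exp_pos _).le
  have h3 : ∫ y in Set.Icc (-δ) δ, Real.exp (-2⁻¹) = 2 * δ * Real.exp (-2⁻¹) := by
    rw [setIntegral_const, Real.volume_real_Icc_of_le (by linarith : -δ ≤ δ), smul_eq_mul]
    ring
  have h4 : (2:ℝ) * Real.exp (-2⁻¹) / Real.sqrt (1+θ) = 2 * δ * Real.exp (-2⁻¹) := by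
    rw [hδdef]; field_simp
  rw [h4]; rw [h3] at h1; linarith

lemma Pearcey_pos {θ : ℝ} (hθ : 0 < θ) : 0 < Pearcey θ :=
  lt_of_lt_of_le (by positivity) (Pearcey_ge hθ)

lemma gauss_quarter : (∫ z : ℝ, Real.exp (-(z^2/4))) = 2 * Real.sqrt π := by
  have h := integral_gaussian (1/4 : ℝ)
  have h2 : (∫ z : ℝ, Real.exp (-(z^2/4))) = ∫ x : ℝ, Real.exp (-(1/4 : ℝ) * x^2) := by
    congr 1; funext x; ring_nf
  rw [h2, h, show π / (1/4 : ℝ) = 4 * π by ring, show (4:ℝ) * π = 2^2 * π by norm_num,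
    Real.sqrt_mul (by positivity) π, Real.sqrt_sq (by norm_num : (0:ℝ) ≤ 2)]

lemma aux_tendsto :
    Tendsto (fun s : ℝ => ∫ z : ℝ, Real.exp (-(z^2/4 + z^3/(6*s) + z^4/(24*s^2))))
      atTop (𝓝 (2 * Real.sqrt π)) := by
  rw [← gauss_quarter]
  apply tendsto_integral_filter_of_dominated_convergence
    (fun z => Real.exp (-(1/12 : ℝ) * z^2))
  · filter_upwards with s
    have hc : Continuous fun z : ℝ => Real.exp (-(z^2/4 + z^3/(6*s) + z^4/(24*s^2))) := by
      fun_prop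
    exact hc.aestronglyMeasurable
  · filter_upwards [eventually_ge_atTop (1:ℝ)] with s hs
    filter_upwards with z
    rw [Real.norm_eq_abs, abs_of_pos (Real.exp_pos _)]
    apply Real.exp_le_exp.2
    have hs0 : (0:ℝ) < s := by linarith
    have hkey : z^2/6 + z^3/(6*s) + z^4/(24*s^2) = (2*s*z + z^2)^2/(24*s^2) := by
      field_simp; ring
    nlinarith [div_nonneg (sq_nonneg (2*s*z + z^2)) (by positivity : (0:ℝ) ≤ 24*s^2)]
  · exact integrable_exp_neg_mul_sq (by norm_num)
  · filter_upwards with z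
    have h1 : Tendsto (fun s : ℝ => z^3/(6*s)) atTop (𝓝 0) := by
      have := tendsto_inv_atTop_zero.const_mul (z^3/6)
      rw [mul_zero] at this
      refine this.congr fun s => by ring
    have h2 : Tendsto (fun s : ℝ => z^4/(24*s^2)) atTop (𝓝 0) := by
      have hp : Tendsto (fun s : ℝ => s^2) atTop atTop := tendsto_pow_atTop (by norm_num)
      have := (tendsto_inv_atTop_zero.comp hp).const_mul (z^4/24)
      rw [mul_zero] at this
      refine this.congr fun s => by simp [Function.comp]; ring
    have h3 : Tendsto (fun s : ℝ => -(z^2/4 + z^3/(6*s) + z^4/(24*s^2))) atTop (𝓝 (-(z^2/4))) := by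
      have := ((tendsto_const_nhds (x := z^2/4)).add h1).add h2
      rw [add_zero, add_zero] at this
      exact this.neg
    exact (Real.continuous_exp.tendsto _).comp h3

lemma tendsto_sqrt_atTop : Tendsto Real.sqrt atTop atTop := by
  refine tendsto_atTop_atTop.2 fun b => ⟨b^2 ⊔ 0, fun a ha => ?_⟩
  calc b ≤ |b| := le_abs_self b
    _ = Real.sqrt (b^2) := (Real.sqrt_sq_eq_abs b).symm
    _ ≤ Real.sqrt a := Real.sqrt_le_sqrt (le_trans le_sup_left ha)

lemma sqrtPearcey_tendsto :
    Tendsto (fun θ : ℝ => Real.sqrt θ * Pearcey θ) atTop (𝓝 (2 * Real.sqrt π)) := by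
  have hcomp := aux_tendsto.comp _root_.tendsto_sqrt_atTop
  apply hcomp.congr'
  filter_upwards [eventually_ge_atTop (1:ℝ)] with θ hθ
  have hθ0 : (0:ℝ) < θ := by linarith
  set s : ℝ := Real.sqrt θ with hsdef
  have hs : 0 < s := Real.sqrt_pos.2 hθ0
  have hs2 : s^2 = θ := Real.sq_sqrt hθ0.le
  have hpt : ∀ z : ℝ, Real.exp (-θ * Pfun (s⁻¹ * z))
      = Real.exp (-(z^2/4 + z^3/(6*s) + z^4/(24*s^2))) := by
    intro z
    congr 1
    rw [← hs2]
    unfold Pfun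
    field_simp
  have hint := MeasureTheory.Measure.integral_comp_mul_left
    (fun y : ℝ => Real.exp (-θ * Pfun y)) s⁻¹
  simp only [hpt] at hint
  rw [Function.comp_apply]
  rw [hint, inv_inv, abs_of_pos hs, smul_eq_mul]
  rfl

lemma cube_exp_bound (a : ℝ) (ha : 0 ≤ a) : (1+(1+a)^2)*(1+a) ≤ 6 * Real.exp a := by
  have h := Real.sum_le_exp_of_nonneg ha 4
  norm_num [Finset.sum_range_succ, Nat.factorial] at h
  nlinarith [h]

lemma integrable_B :
    Integrable (fun t : ℝ =>
      Real.exp (-(1/36:ℝ)*t^2) * (1+(1+|t|)^2) * (1+|t|) / (2*Real.exp (-2⁻¹))) := by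
  have hc0 : (0:ℝ) < 2*Real.exp (-2⁻¹) := by positivity
  apply Integrable.mono'
    ((integrable_exp_neg_mul_sq (show (0:ℝ) < 1/72 by norm_num)).const_mul
      (6*Real.exp 18 / (2*Real.exp (-2⁻¹))))
  · have hcont : Continuous fun t : ℝ =>
        Real.exp (-(1/36:ℝ)*t^2) * (1+(1+|t|)^2) * (1+|t|) / (2*Real.exp (-2⁻¹)) := by
      fun_prop
    exact hcont.aestronglyMeasurable
  · filter_upwards with t
    rw [Real.norm_eq_abs, abs_of_nonneg (by positivity)]
    have key1 := cube_exp_bound |t| (abs_nonneg t)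
    have key2 : Real.exp (-(1/36:ℝ)*t^2) * Real.exp |t| ≤ Real.exp 18 * Real.exp (-(1/72:ℝ)*t^2) := by
      rw [← Real.exp_add, ← Real.exp_add]
      apply Real.exp_le_exp.2
      nlinarith [sq_nonneg (|t| - 36), sq_abs t]
    have hX : Real.exp (-(1/36:ℝ)*t^2) * (1+(1+|t|)^2) * (1+|t|)
        ≤ 6 * Real.exp 18 * Real.exp (-(1/72:ℝ)*t^2) := by
      nlinarith [mul_le_mul_of_nonneg_left key1 (Real.exp_nonneg (-(1/36:ℝ)*t^2)), key2,
        Real.exp_nonneg (-(1/36:ℝ)*t^2), Real.exp_nonneg (-(1/72:ℝ)*t^2)]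
    rw [div_le_iff₀ hc0]
    have heq : 6*Real.exp 18 / (2*Real.exp (-2⁻¹)) * Real.exp (-(1/72:ℝ)*t^2) * (2*Real.exp (-2⁻¹))
        = 6 * Real.exp 18 * Real.exp (-(1/72:ℝ)*t^2) := by
      field_simp
    rw [heq]
    exact hX

noncomputable def fI (r x : ℝ) : ℝ :=
  Real.exp (-x^4 * Pfun (r / x - 1)) / Pearcey (x^4) * |x|

lemma hE_eq {r t : ℝ} (hr : r ≠ 0) (hx : r + t/r ≠ 0) :
    (r + t/r)^4 * Pfun (r / (r + t/r) - 1) = t^2/4 + t^3/(3*r^2) + t^4/(8*r^4) := by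
  have h2 : r^2 + t ≠ 0 := by
    intro h
    apply hx
    have ht : t = -r^2 := by linarith
    rw [ht]
    field_simp
    ring
  unfold Pfun
  have hrw : r + t/r = (r^2+t)/r := by field_simp
  have hrw2 : r / ((r^2+t)/r) = r^2/(r^2+t) := by
    rw [div_div_eq_mul_div]; ring_nf
  rw [hrw, hrw2]
  field_simp
  ring

lemma hE_ge {r t : ℝ} (hr : r ≠ 0) : t^2/36 ≤ t^2/4 + t^3/(3*r^2) + t^4/(8*r^4) := by
  have h : t^2/4 + t^3/(3*r^2) + t^4/(8*r^4) - t^2/36 = (3*t^2 + 4*t*r^2)^2/(72*r^4) := by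
    field_simp
    ring
  nlinarith [div_nonneg (sq_nonneg (3*t^2+4*t*r^2)) (by positivity : (0:ℝ) ≤ 72*r^4)]

lemma pow4_pos {x : ℝ} (hx : x ≠ 0) : 0 < x^4 := by
  have h := pow_pos (abs_pos.2 hx) 4
  rwa [← abs_pow, abs_of_nonneg (by positivity : (0:ℝ) ≤ x^4)] at h

lemma main_integral_tendsto :
    Tendsto (fun r : ℝ => ∫ t : ℝ, fI r (r + t/r) / r^3) atTop (𝓝 1) := by
  have hlim : (∫ t : ℝ, Real.exp (-(t^2/4)) / (2*Real.sqrt π)) = 1 := by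
    rw [integral_div, gauss_quarter, div_self (by positivity)]
  rw [← hlim]
  apply tendsto_integral_filter_of_dominated_convergence
    (fun t => Real.exp (-(1/36:ℝ)*t^2) * (1+(1+|t|)^2) * (1+|t|) / (2*Real.exp (-2⁻¹)))
  · filter_upwards with r
    have m1 : Measurable fun t : ℝ => r + t/r := (measurable_id.div_const r).const_add r
    have mP : Measurable Pfun := Pfun_cont.measurable
    have : Measurable fun t : ℝ => fI r (r + t/r) / r^3 := by
      unfold fI
      exact (((((m1.pow_const 4).neg.mul
        (mP.comp ((measurable_const.div m1).sub measurable_const))).exp.div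
        (measurable_Pearcey.comp (m1.pow_const 4))).mul m1.abs).div_const _)
    exact this.aestronglyMeasurable
  · filter_upwards [eventually_ge_atTop (1:ℝ)] with r hr
    have hae : ∀ᵐ t : ℝ, t ≠ -r^2 := by simp [ae_iff]
    filter_upwards [hae] with t ht
    have hr0 : (0:ℝ) < r := by linarith
    set x : ℝ := r + t/r with hxdef
    have hx : x ≠ 0 := by
      intro h
      apply ht
      have : r^2 + t = 0 := by
        have := h
        rw [hxdef] at this
        field_simp at this
        linarith
      linarith
    have hx4 : 0 < x^4 := pow4_pos hx
    have hPpos := Pearcey_pos hx4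
    have hP := Pearcey_ge hx4
    have hc0 : (0:ℝ) < 2*Real.exp (-2⁻¹) := by positivity
    have hfI_nonneg : 0 ≤ fI r x / r^3 :=
      div_nonneg (mul_nonneg (div_nonneg (Real.exp_nonneg _) hPpos.le) (abs_nonneg _))
        (by positivity)
    rw [Real.norm_eq_abs, abs_of_nonneg hfI_nonneg]
    -- key inequalities
    have hEexp : Real.exp (-x^4 * Pfun (r / x - 1)) ≤ Real.exp (-(1/36:ℝ)*t^2) := by
      apply Real.exp_le_exp.2
      have he := hE_eq hr0.ne' (by rw [← hxdef]; exact hx)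
      rw [hxdef, neg_mul, he]
      have := hE_ge (r := r) (t := t) hr0.ne'
      linarith
    have h3 : |x| ≤ r * (1+|t|) := by
      have habs : |x| ≤ |r| + |t|/|r| := by
        rw [hxdef, ← abs_div]
        exact abs_add_le r (t/r)
      rw [abs_of_pos hr0] at habs
      have hdiv : |t|/r ≤ |t| := div_le_self (abs_nonneg t) hr
      nlinarith [abs_nonneg t]
    have h4 : 1 + x^2 ≤ r^2 * (1+(1+|t|)^2) := by
      nlinarith [mul_self_le_mul_self (abs_nonneg x) h3, sq_abs x, abs_nonneg t, abs_nonneg x]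
    have h5 : Real.sqrt (1+x^4) ≤ 1 + x^2 := by
      have hs := Real.sqrt_le_sqrt (show 1+x^4 ≤ (1+x^2)^2 by nlinarith [sq_nonneg x, sq_nonneg (x^2)])
      rwa [Real.sqrt_sq (by positivity)] at hs
    -- assemble
    have step1 : Real.exp (-x^4 * Pfun (r / x - 1)) / Pearcey (x^4)
        ≤ Real.exp (-(1/36:ℝ)*t^2) * (1+x^2) / (2*Real.exp (-2⁻¹)) := by
      have hd : (0:ℝ) < 2*Real.exp (-2⁻¹) / Real.sqrt (1+x^4) := by positivity
      calc Real.exp (-x^4 * Pfun (r / x - 1)) / Pearcey (x^4)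
          ≤ Real.exp (-(1/36:ℝ)*t^2) / (2*Real.exp (-2⁻¹) / Real.sqrt (1+x^4)) :=
            div_le_div₀ (Real.exp_nonneg _) hEexp hd hP
        _ = Real.exp (-(1/36:ℝ)*t^2) * Real.sqrt (1+x^4) / (2*Real.exp (-2⁻¹)) := by
            rw [div_div_eq_mul_div]
        _ ≤ Real.exp (-(1/36:ℝ)*t^2) * (1+x^2) / (2*Real.exp (-2⁻¹)) := by
            gcongr
    have hnum : fI r x ≤ Real.exp (-(1/36:ℝ)*t^2) * (1+x^2) / (2*Real.exp (-2⁻¹)) * (r*(1+|t|)) := by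
      unfold fI
      exact mul_le_mul step1 h3 (abs_nonneg x) (by positivity)
    have step2 : fI r x / r^3
        ≤ Real.exp (-(1/36:ℝ)*t^2) * (1+x^2) / (2*Real.exp (-2⁻¹)) * (r*(1+|t|)) / r^3 := by
      gcongr
    calc fI r x / r^3
        ≤ Real.exp (-(1/36:ℝ)*t^2) * (1+x^2) / (2*Real.exp (-2⁻¹)) * (r*(1+|t|)) / r^3 := step2
      _ = Real.exp (-(1/36:ℝ)*t^2) * (1+x^2) * (1+|t|) / (2*Real.exp (-2⁻¹) * r^2) := by
          field_simp
      _ ≤ Real.exp (-(1/36:ℝ)*t^2) * (r^2*(1+(1+|t|)^2)) * (1+|t|) / (2*Real.exp (-2⁻¹) * r^2) := by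
          gcongr
      _ = Real.exp (-(1/36:ℝ)*t^2) * (1+(1+|t|)^2) * (1+|t|) / (2*Real.exp (-2⁻¹)) := by
          field_simp
  · exact integrable_B
  · filter_upwards with t
    have hsqpi : (0:ℝ) < 2*Real.sqrt π := by positivity
    -- limit of the explicit expression
    have hA : Tendsto (fun r : ℝ => t^2/4 + t^3/(3*r^2) + t^4/(8*r^4)) atTop (𝓝 (t^2/4)) := by
      have h2 : Tendsto (fun r : ℝ => r^2) atTop atTop := tendsto_pow_atTop (by norm_num)
      have h4 : Tendsto (fun r : ℝ => r^4) atTop atTop := tendsto_pow_atTop (by norm_num)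
      have i2 := (tendsto_inv_atTop_zero.comp h2).const_mul (t^3/3)
      have i4 := (tendsto_inv_atTop_zero.comp h4).const_mul (t^4/8)
      rw [mul_zero] at i2 i4
      have := ((tendsto_const_nhds (x := t^2/4)).add i2).add i4
      rw [add_zero, add_zero] at this
      refine this.congr fun r => ?_
      simp only [Function.comp]
      ring
    have hexp : Tendsto (fun r : ℝ => Real.exp (-(t^2/4 + t^3/(3*r^2) + t^4/(8*r^4))))
        atTop (𝓝 (Real.exp (-(t^2/4)))) := (Real.continuous_exp.tendsto _).comp hA.neg
    have hcube : Tendsto (fun r : ℝ => (1+t/r^2)^3) atTop (𝓝 1) := by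
      have h2 : Tendsto (fun r : ℝ => r^2) atTop atTop := tendsto_pow_atTop (by norm_num)
      have i2 := (tendsto_inv_atTop_zero.comp h2).const_mul t
      rw [mul_zero] at i2
      have hb : Tendsto (fun r : ℝ => 1+t/r^2) atTop (𝓝 1) := by
        have := (tendsto_const_nhds (x := (1:ℝ))).add i2
        rw [add_zero] at this
        refine this.congr fun r => ?_
        simp only [Function.comp]
        ring
      have := hb.pow 3
      rwa [one_pow] at this
    have hxTop : Tendsto (fun r : ℝ => (r + t/r)^4) atTop atTop := by
      apply (tendsto_pow_atTop (by norm_num : 4 ≠ 0)).comp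
      apply tendsto_atTop_mono' atTop ?_ (tendsto_atTop_add_const_right atTop (-|t|) tendsto_id)
      filter_upwards [eventually_ge_atTop (1:ℝ)] with r hr
      have hr0 : (0:ℝ) < r := by linarith
      have hkey : -|t| * r ≤ t := by nlinarith [neg_abs_le t, abs_nonneg t]
      have : -|t| ≤ t/r := by
        rw [le_div_iff₀ hr0]
        exact hkey
      simp only [id_eq]
      linarith
    have hden : Tendsto (fun r : ℝ => Real.sqrt ((r + t/r)^4) * Pearcey ((r + t/r)^4))
        atTop (𝓝 (2*Real.sqrt π)) := sqrtPearcey_tendsto.comp hxTop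
    have hT : Tendsto (fun r : ℝ =>
        Real.exp (-(t^2/4 + t^3/(3*r^2) + t^4/(8*r^4))) * (1+t/r^2)^3
          / (Real.sqrt ((r + t/r)^4) * Pearcey ((r + t/r)^4)))
        atTop (𝓝 (Real.exp (-(t^2/4)) / (2*Real.sqrt π))) := by
      have := (hexp.mul hcube).div hden hsqpi.ne'
      rwa [mul_one] at this
    apply hT.congr'
    filter_upwards [eventually_ge_atTop (1:ℝ),
      (tendsto_pow_atTop (by norm_num : 2 ≠ 0)).eventually_ge_atTop (|t|+1)] with r hr hr2
    have hr0 : (0:ℝ) < r := by linarith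
    have hxpos : 0 < r + t/r := by
      rw [show r + t/r = (r^2+t)/r by field_simp]
      apply div_pos ?_ hr0
      have := abs_nonneg t
      have := neg_abs_le t
      linarith
    have hx : r + t/r ≠ 0 := hxpos.ne'
    have hPpos := Pearcey_pos (pow4_pos hx)
    have hsq : Real.sqrt ((r + t/r)^4) = (r + t/r)^2 := by
      rw [show (r + t/r)^4 = ((r + t/r)^2)^2 by ring, Real.sqrt_sq (sq_nonneg _)]
    rw [hsq]
    unfold fI
    rw [neg_mul, hE_eq hr0.ne' hx, abs_of_pos hxpos]
    have hXr : 1 + t/r^2 = (r + t/r)/r := by field_simp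
    rw [hXr]
    set A := Real.exp (-(t^2/4 + t^3/(3*r^2) + t^4/(8*r^4))) with hA
    set P := Pearcey ((r + t/r)^4) with hPd
    set X := r + t/r with hX
    have hPne : P ≠ 0 := hPpos.ne'
    have hrne : r ≠ 0 := hr0.ne'
    have hXne : X ≠ 0 := hx
    field_simp [hPne, hrne, hXne]

lemma stepA {r : ℝ} (hr0 : 0 < r) :
    (1/2) * (∫ x : ℝ, fI r x) / r^2 = (1/2) * ∫ t : ℝ, fI r (r + t/r) / r^3 := by
  have e1 : (fun t : ℝ => fI r (r + t/r)) = fun t : ℝ => (fun u : ℝ => fI r (u + r)) (r⁻¹ * t) := by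
    funext t
    simp only
    congr 1
    rw [add_comm, div_eq_inv_mul]
  have hsub : (∫ t : ℝ, fI r (r + t/r)) = r * ∫ x : ℝ, fI r x := by
    rw [e1, MeasureTheory.Measure.integral_comp_mul_left (fun u : ℝ => fI r (u + r)) r⁻¹,
      inv_inv, abs_of_pos hr0, smul_eq_mul, integral_add_right_eq_self]
  rw [integral_div, hsub]
  field_simp

lemma final_real :
    Tendsto (fun r : ℝ =>
      (1/2) * (∫ x : ℝ, Real.exp (-x^4 * Pfun (r / x - 1)) / Pearcey (x^4) * |x|) / r^2)
      atTop (𝓝 (1/2)) := by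
  have h := main_integral_tendsto.const_mul (1/2 : ℝ)
  rw [mul_one] at h
  apply h.congr'
  filter_upwards [eventually_gt_atTop (0:ℝ)] with r hr0
  exact (stepA hr0).symm

/-- The limiting one-point function `ρ(ξ) = (1/2) ∫ exp(-x⁴P(Re ξ/x - 1))/𝒫(x⁴) |x| dx`. -/
noncomputable def ρlim (ξ : ℂ) : ℝ :=
  (1/2) * ∫ x : ℝ, Real.exp (-x^4 * Pfun (ξ.re / x - 1)) / Pearcey (x^4) * |x|

/-- **eq. (asymp rho).** Growth of the limiting one-point function:
`ρ(ξ)/Re(ξ)² → 1/2` as `Re(ξ) → +∞`. -/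
theorem stmt_17 :
    Filter.Tendsto (fun ξ : ℂ => ρlim ξ / ξ.re ^ 2)
      (Filter.comap Complex.re Filter.atTop) (nhds (1/2)) := by
  exact final_real.comp tendsto_comap
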